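/- For n ≥ 6, the positive co-degree Turán number of C5 satisfies: co^+ex(n, C5) = 2k if n ∈ {4k, 4k+1, 4k+2}, and co^+ex(n, C5) = 2k+1 if n = 4k+3. -/

import Mathlib

open Finset

/-- The link (co-neighborhood) of the pair `{u,v}`: all `w` with `{u,v,w}` an edge. -/
def link {n : ℕ} (E : Finset (Finset (Fin n))) (u v : Fin n) : Finset (Fin n) :=
  Finset.univ.filter (fun w => ({u, v, w} : Finset (Fin n)) ∈ E)

/-- `E` is the edge set of a 3-graph: every edge has exactly 3 vertices. -/
def isEdgeSet {n : ℕ} (E : Finset (Finset (Fin n))) : Prop := ∀ e ∈ E, e.card = 3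

/-- `E` contains a copy of `C5⁻ = {abc, bcd, cde, dea}`. -/
def hasC5minus {n : ℕ} (E : Finset (Finset (Fin n))) : Prop :=
  ∃ a b c d e : Fin n,
    a ≠ b ∧ a ≠ c ∧ a ≠ d ∧ a ≠ e ∧ b ≠ c ∧ b ≠ d ∧ b ≠ e ∧ c ≠ d ∧ c ≠ e ∧ d ≠ e ∧
    ({a, b, c} : Finset (Fin n)) ∈ E ∧ ({b, c, d} : Finset (Fin n)) ∈ E ∧
    ({c, d, e} : Finset (Fin n)) ∈ E ∧ ({d, e, a} : Finset (Fin n)) ∈ E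

/-- `E` contains a copy of `C5 = {abc, bcd, cde, dea, eab}`. -/
def hasC5 {n : ℕ} (E : Finset (Finset (Fin n))) : Prop :=
  ∃ a b c d e : Fin n,
    a ≠ b ∧ a ≠ c ∧ a ≠ d ∧ a ≠ e ∧ b ≠ c ∧ b ≠ d ∧ b ≠ e ∧ c ≠ d ∧ c ≠ e ∧ d ≠ e ∧
    ({a, b, c} : Finset (Fin n)) ∈ E ∧ ({b, c, d} : Finset (Fin n)) ∈ E ∧
    ({c, d, e} : Finset (Fin n)) ∈ E ∧ ({d, e, a} : Finset (Fin n)) ∈ E ∧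
    ({e, a, b} : Finset (Fin n)) ∈ E

/-- `a, b, c, d` form a `K4` in `E`: all four triples among them are edges. -/
def isK4 {n : ℕ} (E : Finset (Finset (Fin n))) (a b c d : Fin n) : Prop :=
  a ≠ b ∧ a ≠ c ∧ a ≠ d ∧ b ≠ c ∧ b ≠ d ∧ c ≠ d ∧
  ({a, b, c} : Finset (Fin n)) ∈ E ∧ ({a, b, d} : Finset (Fin n)) ∈ E ∧
  ({a, c, d} : Finset (Fin n)) ∈ E ∧ ({b, c, d} : Finset (Fin n)) ∈ E

/-- `E` contains a copy of `K4⁻ = {abc, abd, acd}`. -/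
def hasK4minus {n : ℕ} (E : Finset (Finset (Fin n))) : Prop :=
  ∃ a b c d : Fin n, a ≠ b ∧ a ≠ c ∧ a ≠ d ∧ b ≠ c ∧ b ≠ d ∧ c ≠ d ∧
    ({a, b, c} : Finset (Fin n)) ∈ E ∧ ({a, b, d} : Finset (Fin n)) ∈ E ∧
    ({a, c, d} : Finset (Fin n)) ∈ E

/-- `A`-set of a `K4`: intersection of the three pairwise links of `{x, y, z}`
(the set `A_w` for the fourth vertex `w` of the `K4`). -/
def Aset {n : ℕ} (E : Finset (Finset (Fin n))) (x y z : Fin n) : Finset (Fin n) :=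
  link E x y ∩ link E y z ∩ link E z x

/-- `B`-set of a `K4`: `B_w = N(w,x) ∩ N(w,y) ∩ N(w,z)`. -/
def Bset {n : ℕ} (E : Finset (Finset (Fin n))) (w x y z : Fin n) : Finset (Fin n) :=
  link E w x ∩ link E w y ∩ link E w z

section Upper

variable {n : ℕ} {E : Finset (Finset (Fin n))}

/-! ### triple permutation lemmas -/

lemma tperm {α : Type*} [DecidableEq α] (a b c : α) :
    ({a, b, c} : Finset α) = {b, a, c} ∧ ({a, b, c} : Finset α) = {a, c, b} ∧
    ({a, b, c} : Finset α) = {b, c, a} ∧ ({a, b, c} : Finset α) = {c, a, b} ∧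
    ({a, b, c} : Finset α) = {c, b, a} := by
  refine ⟨?_, ?_, ?_, ?_, ?_⟩ <;>
    (ext x; simp only [Finset.mem_insert, Finset.mem_singleton]; tauto)

lemma mem_link {u v w : Fin n} : w ∈ link E u v ↔ ({u, v, w} : Finset (Fin n)) ∈ E := by
  simp [link]

/-- the vertices of an edge are pairwise distinct -/
lemma edge_ne (hE : isEdgeSet E) {a b c : Fin n} (h : ({a, b, c} : Finset (Fin n)) ∈ E) :
    a ≠ b ∧ a ≠ c ∧ b ≠ c := by
  have hcard := hE _ h
  refine ⟨?_, ?_, ?_⟩ <;> rintro rfl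
  · rw [Finset.insert_idem] at hcard
    have := Finset.card_insert_le a ({c} : Finset (Fin n))
    simp at this; omega
  · rw [(tperm a b a).2.1, Finset.insert_idem] at hcard
    have := Finset.card_insert_le a ({b} : Finset (Fin n))
    simp at this; omega
  · have he : ({a, b, b} : Finset (Fin n)) = {a, b} := by
      ext x; simp only [Finset.mem_insert, Finset.mem_singleton]; tauto
    rw [he] at hcard
    have := Finset.card_insert_le a ({b} : Finset (Fin n))
    simp at this; omega

lemma link_ne_left (hE : isEdgeSet E) {u v w : Fin n} (h : w ∈ link E u v) : w ≠ u := by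
  rw [mem_link] at h
  exact ((edge_ne hE h).2.1).symm

lemma link_ne_right (hE : isEdgeSet E) {u v w : Fin n} (h : w ∈ link E u v) : w ≠ v := by
  rw [mem_link] at h
  exact ((edge_ne hE h).2.2).symm

lemma link_ne_base (hE : isEdgeSet E) {u v w : Fin n} (h : w ∈ link E u v) : u ≠ v := by
  rw [mem_link] at h
  exact (edge_ne hE h).1

lemma not_mem_link_self_left (hE : isEdgeSet E) (u v : Fin n) : u ∉ link E u v :=
  fun h => (link_ne_left hE h) rfl

lemma not_mem_link_self_right (hE : isEdgeSet E) (u v : Fin n) : v ∉ link E u v :=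
  fun h => (link_ne_right hE h) rfl



lemma E_perm {x y z : Fin n} (h : ({x, y, z} : Finset (Fin n)) ∈ E) :
    ({x, z, y} : Finset (Fin n)) ∈ E ∧ ({y, x, z} : Finset (Fin n)) ∈ E ∧
    ({y, z, x} : Finset (Fin n)) ∈ E ∧ ({z, x, y} : Finset (Fin n)) ∈ E ∧
    ({z, y, x} : Finset (Fin n)) ∈ E := by
  obtain ⟨e1, e2, e3, e4, e5⟩ := tperm x y z
  exact ⟨e2 ▸ h, e1 ▸ h, e3 ▸ h, e4 ▸ h, e5 ▸ h⟩

/-- membership in a link, all the ways -/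
lemma link_rot {u v w : Fin n} (h : w ∈ link E u v) :
    w ∈ link E v u ∧ u ∈ link E v w ∧ u ∈ link E w v ∧ v ∈ link E u w ∧ v ∈ link E w u := by
  rw [mem_link] at h
  obtain ⟨p1, p2, p3, p4, p5⟩ := E_perm h
  exact ⟨mem_link.mpr p2, mem_link.mpr p3, mem_link.mpr p5, mem_link.mpr p1,
    mem_link.mpr p4⟩

lemma link_pos {δ : ℕ} (hδ : ∀ u v : Fin n, (link E u v).Nonempty → δ ≤ (link E u v).card)
    {a b c : Fin n} (h : ({a, b, c} : Finset (Fin n)) ∈ E) : δ ≤ (link E a b).card :=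
  hδ a b ⟨c, mem_link.mpr h⟩

/-- counting: if A avoids X and Y and c avoids everything, then
`|A| + |X| + |Y| + 1 ≤ n + |X ∩ Y|`. -/
lemma count_key {A X Y : Finset (Fin n)} {c : Fin n}
    (hAX : ∀ w ∈ A, w ∉ X) (hAY : ∀ w ∈ A, w ∉ Y)
    (hcA : c ∉ A) (hcX : c ∉ X) (hcY : c ∉ Y) :
    A.card + X.card + Y.card + 1 ≤ n + (X ∩ Y).card := by
  classical
  have hXY := Finset.card_union_add_card_inter X Y
  have hdisj : Disjoint A (X ∪ Y) := by
    rw [Finset.disjoint_left]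
    intro w hw hw'
    rcases Finset.mem_union.mp hw' with h | h
    exacts [hAX w hw h, hAY w hw h]
  have hAXY : (A ∪ (X ∪ Y)).card = A.card + (X ∪ Y).card :=
    Finset.card_union_of_disjoint hdisj
  have hc : c ∉ A ∪ (X ∪ Y) := by
    simp only [Finset.mem_union]
    tauto
  have h1 : (insert c (A ∪ (X ∪ Y))).card ≤ n := by
    have := Finset.card_le_univ (insert c (A ∪ (X ∪ Y)))
    simpa using this
  rw [Finset.card_insert_of_notMem hc, hAXY] at h1
  omega

/-- build a C5 -/
lemma C5_of (hC5 : ¬ hasC5 E) {a b c d e : Fin n}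
    (hab : a ≠ b) (hac : a ≠ c) (had : a ≠ d) (hae : a ≠ e) (hbc : b ≠ c)
    (hbd : b ≠ d) (hbe : b ≠ e) (hcd : c ≠ d) (hce : c ≠ e) (hde : d ≠ e)
    (e1 : ({a, b, c} : Finset (Fin n)) ∈ E) (e2 : ({b, c, d} : Finset (Fin n)) ∈ E)
    (e3 : ({c, d, e} : Finset (Fin n)) ∈ E) (e4 : ({d, e, a} : Finset (Fin n)) ∈ E)
    (e5 : ({e, a, b} : Finset (Fin n)) ∈ E) : False :=
  hC5 ⟨a, b, c, d, e, hab, hac, had, hae, hbc, hbd, hbe, hcd, hce, hde, e1, e2, e3, e4, e5⟩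

/-- the cross rule: if `abc ∈ E`, `t ∈ S_a`, `s ∈ S_b` then `{c,s,t} ∉ E`
(else `(t,a,b,s,c)` is a C5). -/
lemma cross_rule (hE : isEdgeSet E) (hC5 : ¬ hasC5 E) {a b c t s : Fin n}
    (habc : ({a, b, c} : Finset (Fin n)) ∈ E)
    (ht1 : t ∈ link E a b) (ht2 : t ∈ link E a c)
    (hs1 : s ∈ link E b a) (hs2 : s ∈ link E b c)
    (hedge : ({c, s, t} : Finset (Fin n)) ∈ E) : False := by
  obtain ⟨hab, hac, hbc⟩ := edge_ne hE habc
  have hta := link_ne_left hE ht1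
  have htb := link_ne_right hE ht1
  have htc := link_ne_right hE ht2
  have hsb := link_ne_left hE hs1
  have hsa := link_ne_right hE hs1
  have hsc := link_ne_right hE hs2
  have hst : s ≠ t := (edge_ne hE hedge).2.2
  -- cycle (t, a, b, s, c)
  refine C5_of hC5 (a := t) (b := a) (c := b) (d := s) (e := c)
    hta htb hst.symm htc hab hsa.symm hac hsb.symm hbc hsc ?_ ?_ ?_ ?_ ?_
  · -- {t, a, b}
    exact (E_perm (mem_link.mp ht1)).2.2.2.1
  · -- {a, b, s}
    exact (E_perm (mem_link.mp hs1)).2.1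
  · -- {b, s, c}
    exact (E_perm (mem_link.mp hs2)).1
  · -- {s, c, t}
    exact (E_perm hedge).2.1
  · -- {c, t, a}
    exact (E_perm (mem_link.mp ht2)).2.2.1

/-- K4-free ascent: from any edge, produce an edge with strictly larger apex set. -/
lemma apex_grow (hE : isEdgeSet E) (hC5 : ¬ hasC5 E) {δ : ℕ}
    (hδ : ∀ u v : Fin n, (link E u v).Nonempty → δ ≤ (link E u v).card)
    (hn2 : n ≤ 2 * δ) (hK4 : ∀ a b c d : Fin n, ¬ isK4 E a b c d)
    {a b c : Fin n} (habc : ({a, b, c} : Finset (Fin n)) ∈ E) :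
    ∃ a' b' c' : Fin n, ({a', b', c'} : Finset (Fin n)) ∈ E ∧
      (link E a b ∩ link E a c).card + 1 ≤ (link E a' b' ∩ link E a' c').card := by
  classical
  obtain ⟨hab, hac, hbc⟩ := edge_ne hE habc
  -- S_b is nonempty
  have hSb : 1 ≤ (link E b a ∩ link E b c).card := by
    have h1 := count_key (A := (∅ : Finset (Fin n))) (X := link E b a) (Y := link E b c)
      (c := b) (by simp) (by simp) (by simp)
      (not_mem_link_self_left hE b a) (not_mem_link_self_left hE b c)
    have h2 : δ ≤ (link E b a).card := link_pos hδ (E_perm habc).2.1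
    have h3 : δ ≤ (link E b c).card := link_pos hδ (E_perm habc).2.2.1
    simp only [Finset.card_empty] at h1
    omega
  obtain ⟨s, hs⟩ := Finset.card_pos.mp (show 0 < (link E b a ∩ link E b c).card by omega)
  have hs1 : s ∈ link E b a := (Finset.mem_inter.mp hs).1
  have hs2 : s ∈ link E b c := (Finset.mem_inter.mp hs).2
  -- the new edge is {c, b, s}, new apex set is L_cb ∩ L_cs
  refine ⟨c, b, s, (E_perm (mem_link.mp hs2)).2.1, ?_⟩
  have key := count_key (A := link E a b ∩ link E a c) (X := link E c b) (Y := link E c s)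
    (c := c)
    (by -- A ∩ L_cb = ∅ : else K4
      intro w hw hw'
      have hw1 := (Finset.mem_inter.mp hw).1
      have hw2 := (Finset.mem_inter.mp hw).2
      exact hK4 a b c w ⟨hab, hac, (link_ne_left hE hw1).symm, hbc,
        (link_ne_right hE hw1).symm, (link_ne_right hE hw2).symm,
        habc, mem_link.mp hw1, mem_link.mp hw2, (E_perm (mem_link.mp hw')).2.1⟩)
    (by -- A ∩ L_cs = ∅ : else C5 by cross rule
      intro w hw hw'
      exact cross_rule hE hC5 habc (Finset.mem_inter.mp hw).1 (Finset.mem_inter.mp hw).2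
        hs1 hs2 (mem_link.mp hw'))
    (by -- c ∉ A
      intro hc
      exact not_mem_link_self_right hE a c (Finset.mem_inter.mp hc).2)
    (not_mem_link_self_left hE c b) (not_mem_link_self_left hE c s)
  have h2 : δ ≤ (link E c b).card := link_pos hδ (E_perm habc).2.2.2.2
  have h3 : δ ≤ (link E c s).card := by
    refine link_pos hδ (a := c) (b := s) (c := b) ?_
    exact (E_perm (mem_link.mp hs2)).2.2.1
  omega

/-- there is a K4 (assuming `n ≤ 2δ`). -/
lemma exists_K4 (hE : isEdgeSet E) (hC5 : ¬ hasC5 E) {δ : ℕ}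
    (hδ : ∀ u v : Fin n, (link E u v).Nonempty → δ ≤ (link E u v).card)
    (hn2 : n ≤ 2 * δ) (hEne : E.Nonempty) :
    ∃ a b c d : Fin n, isK4 E a b c d := by
  classical
  by_contra hcon
  push_neg at hcon
  have key : ∀ m : ℕ, ∃ a b c : Fin n, ({a, b, c} : Finset (Fin n)) ∈ E ∧
      m ≤ (link E a b ∩ link E a c).card := by
    intro m
    induction m with
    | zero =>
      obtain ⟨e, he⟩ := hEne
      obtain ⟨a, b, c, _, _, _, rfl⟩ := Finset.card_eq_three.mp (hE e he)
      exact ⟨a, b, c, he, Nat.zero_le _⟩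
    | succ m ih =>
      obtain ⟨a, b, c, habc, hm⟩ := ih
      obtain ⟨a', b', c', h1, h2⟩ := apex_grow hE hC5 hδ hn2 hcon habc
      exact ⟨a', b', c', h1, by omega⟩
  obtain ⟨a, b, c, _, hm⟩ := key (n + 1)
  have := Finset.card_le_univ (link E a b ∩ link E a c)
  simp at this
  omega


lemma link_comm (u v : Fin n) : link E u v = link E v u := by
  ext w
  rw [mem_link, mem_link, (tperm u v w).1]

/-- C1 pattern: `(v,p,q,r,s)` is a C5. -/
lemma C1 (hE : isEdgeSet E) (hC5 : ¬ hasC5 E) {p q r s v : Fin n}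
    (hpqr : ({p, q, r} : Finset (Fin n)) ∈ E) (hqrs : ({q, r, s} : Finset (Fin n)) ∈ E)
    (hps : p ≠ s)
    (h1 : v ∈ link E p q) (h2 : v ∈ link E r s) (h3 : v ∈ link E p s) : False := by
  obtain ⟨hpq, hpr, hqr⟩ := edge_ne hE hpqr
  obtain ⟨_, hqs, hrs⟩ := edge_ne hE hqrs
  refine C5_of hC5 (a := v) (b := p) (c := q) (d := r) (e := s)
    (link_ne_left hE h1) (link_ne_right hE h1) (link_ne_left hE h2)
    (link_ne_right hE h2) hpq hpr hps hqr hqs hrs ?_ hpqr hqrs ?_ ?_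
  · exact (E_perm (mem_link.mp h1)).2.2.2.1
  · exact mem_link.mp h2
  · exact (E_perm (mem_link.mp h3)).2.2.1

lemma count_key' {A X Y : Finset (Fin n)}
    (hAX : ∀ w ∈ A, w ∉ X) (hAY : ∀ w ∈ A, w ∉ Y) :
    A.card + X.card + Y.card ≤ n + (X ∩ Y).card := by
  classical
  have hXY := Finset.card_union_add_card_inter X Y
  have hdisj : Disjoint A (X ∪ Y) := by
    rw [Finset.disjoint_left]
    intro w hw hw'
    rcases Finset.mem_union.mp hw' with h | h
    exacts [hAX w hw h, hAY w hw h]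
  have hAXY : (A ∪ (X ∪ Y)).card = A.card + (X ∪ Y).card :=
    Finset.card_union_of_disjoint hdisj
  have h1 : (A ∪ (X ∪ Y)).card ≤ n := by
    have := Finset.card_le_univ (A ∪ (X ∪ Y))
    simpa using this
  omega

lemma K4_perm1 {p q r s : Fin n} (h : isK4 E p q r s) : isK4 E p r s q := by
  obtain ⟨h1, h2, h3, h4, h5, h6, e1, e2, e3, e4⟩ := h
  exact ⟨h2, h3, h1, h6, h4.symm, h5.symm, e3, (E_perm e1).1, (E_perm e2).1,
    (E_perm e4).2.2.1⟩

lemma K4_perm2 {p q r s : Fin n} (h : isK4 E p q r s) : isK4 E p s q r := by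
  obtain ⟨h1, h2, h3, h4, h5, h6, e1, e2, e3, e4⟩ := h
  exact ⟨h3, h1, h2, h5.symm, h6.symm, h4, (E_perm e2).1, (E_perm e3).1, e1,
    (E_perm e4).2.2.2.1⟩

/-- all four mixed-link exclusions of the pairing `(ab|cd)`: an element of
`L_ab ∩ L_cd` is in no mixed link. -/
lemma M_not_mixed (hE : isEdgeSet E) (hC5 : ¬ hasC5 E) {a b c d : Fin n}
    (hK4 : isK4 E a b c d) {v : Fin n}
    (h1 : v ∈ link E a b) (h2 : v ∈ link E c d) :
    v ∉ link E a c ∧ v ∉ link E a d ∧ v ∉ link E b c ∧ v ∉ link E b d := by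
  obtain ⟨hab, hac, had, hbc, hbd, hcd, e1, e2, e3, e4⟩ := hK4
  refine ⟨?_, ?_, ?_, ?_⟩ <;> intro hmix
  · exact C1 hE hC5 e2 (E_perm e4).1 hac h1 ((link_comm c d) ▸ h2) hmix
  · exact C1 hE hC5 e1 e4 had h1 h2 hmix
  · exact C1 hE hC5 (E_perm e2).2.1 (E_perm e3).1 hbc ((link_comm a b) ▸ h1)
      ((link_comm c d) ▸ h2) hmix
  · exact C1 hE hC5 (E_perm e1).2.1 e3 hbd ((link_comm a b) ▸ h1) h2 hmix

/-- one pairing inequality -/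
lemma pairing_ineq (hE : isEdgeSet E) (hC5 : ¬ hasC5 E) {a b c d : Fin n}
    (hK4 : isK4 E a b c d) :
    (link E a b ∩ link E c d).card + (link E a c).card + (link E b d).card
      ≤ n + (link E a c ∩ link E b d).card := by
  refine count_key' ?_ ?_ <;> intro w hw <;>
    obtain ⟨hw1, hw2⟩ := Finset.mem_inter.mp hw
  · exact (M_not_mixed hE hC5 hK4 hw1 hw2).1
  · exact fun h => (M_not_mixed hE hC5 hK4 hw1 hw2).2.2.2 h

/-- a K4 forces `2δ ≤ n`. -/
lemma K4_bound (hE : isEdgeSet E) (hC5 : ¬ hasC5 E) {δ : ℕ}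
    (hδ : ∀ u v : Fin n, (link E u v).Nonempty → δ ≤ (link E u v).card)
    {p q r s : Fin n} (hK4 : isK4 E p q r s) : 2 * δ ≤ n := by
  obtain ⟨hpq, hpr, hps, hqr, hqs, hrs, e1, e2, e3, e4⟩ := id hK4
  have I1 := pairing_ineq hE hC5 hK4
  have I2 := pairing_ineq hE hC5 (K4_perm1 hK4)
  have I3 := pairing_ineq hE hC5 (K4_perm2 hK4)
  -- I1 : m(pq,rs) + ℓ(pr) + ℓ(qs) ≤ n + m(pr,qs)
  -- I2 : (p r s q) : m(pr,sq) + ℓ(ps) + ℓ(rq) ≤ n + m(ps,rq)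
  -- I3 : (p s q r) : m(ps,qr) + ℓ(pq) + ℓ(sr) ≤ n + m(pq,sr)
  rw [link_comm s q] at I2
  rw [link_comm r q] at I2
  rw [link_comm s r] at I3
  have L1 : δ ≤ (link E p q).card := link_pos hδ e1
  have L2 : δ ≤ (link E p r).card := link_pos hδ (E_perm e1).1
  have L3 : δ ≤ (link E p s).card := link_pos hδ (E_perm e2).1
  have L4 : δ ≤ (link E q r).card := link_pos hδ (E_perm e1).2.2.1
  have L5 : δ ≤ (link E q s).card := link_pos hδ (E_perm e2).2.2.1
  have L6 : δ ≤ (link E r s).card := link_pos hδ (E_perm e3).2.2.1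
  omega


lemma E_of_eq {x y z u v w : Fin n} (h : ({u, v, w} : Finset (Fin n)) ∈ E)
    (h2 : ∀ t : Fin n, (t = x ∨ t = y ∨ t = z) ↔ (t = u ∨ t = v ∨ t = w)) :
    ({x, y, z} : Finset (Fin n)) ∈ E := by
  have : ({x, y, z} : Finset (Fin n)) = {u, v, w} := by
    ext t
    simp only [Finset.mem_insert, Finset.mem_singleton]
    exact h2 t
  rw [this]; exact h

lemma isK4_mk {a b c d : Fin n} (hab : a ≠ b) (hac : a ≠ c) (had : a ≠ d)
    (hbc : b ≠ c) (hbd : b ≠ d) (hcd : c ≠ d)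
    (e1 : ({a, b, c} : Finset (Fin n)) ∈ E) (e2 : ({a, b, d} : Finset (Fin n)) ∈ E)
    (e3 : ({a, c, d} : Finset (Fin n)) ∈ E) (e4 : ({b, c, d} : Finset (Fin n)) ∈ E) :
    isK4 E a b c d := ⟨hab, hac, had, hbc, hbd, hcd, e1, e2, e3, e4⟩

lemma K4_swap12 {a b c d : Fin n} (h : isK4 E a b c d) : isK4 E b a c d := by
  obtain ⟨h1, h2, h3, h4, h5, h6, e1, e2, e3, e4⟩ := h
  exact isK4_mk h1.symm h4 h5 h2 h3 h6 (E_of_eq e1 (by tauto)) (E_of_eq e2 (by tauto))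
    e4 e3

lemma K4_swap23 {a b c d : Fin n} (h : isK4 E a b c d) : isK4 E a c b d := by
  obtain ⟨h1, h2, h3, h4, h5, h6, e1, e2, e3, e4⟩ := h
  exact isK4_mk h2 h1 h3 h4.symm h6 h5 (E_of_eq e1 (by tauto)) e3 e2
    (E_of_eq e4 (by tauto))

lemma K4_swap34 {a b c d : Fin n} (h : isK4 E a b c d) : isK4 E a b d c := by
  obtain ⟨h1, h2, h3, h4, h5, h6, e1, e2, e3, e4⟩ := h
  exact isK4_mk h1 h3 h2 h5 h4 h6.symm e2 e1 (E_of_eq e3 (by tauto))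
    (E_of_eq e4 (by tauto))

lemma mem_Aset {x y z w : Fin n} :
    w ∈ Aset E x y z ↔ w ∈ link E x y ∧ w ∈ link E y z ∧ w ∈ link E z x := by
  simp [Aset, Finset.mem_inter, and_assoc]

lemma mem_Bset {w x y z v : Fin n} :
    v ∈ Bset E w x y z ↔ v ∈ link E w x ∧ v ∈ link E w y ∧ v ∈ link E w z := by
  simp [Bset, Finset.mem_inter, and_assoc]

/-- a member of an A-set together with the triple forms a K4 -/
lemma Aset_K4 (hE : isEdgeSet E) {x y z u : Fin n}
    (hxyz : ({x, y, z} : Finset (Fin n)) ∈ E) (hu : u ∈ Aset E x y z) :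
    isK4 E u x y z := by
  rw [mem_Aset] at hu
  obtain ⟨h1, h2, h3⟩ := hu
  obtain ⟨hxy, hxz, hyz⟩ := edge_ne hE hxyz
  exact isK4_mk (link_ne_left hE h1) (link_ne_right hE h1) (link_ne_right hE h2)
    hxy hxz hyz (E_of_eq (mem_link.mp h1) (by tauto)) (E_of_eq (mem_link.mp h3) (by tauto))
    (E_of_eq (mem_link.mp h2) (by tauto)) hxyz

/-- the tight-case structure at a K4: the `(ab|cd)` links have size `δ` and partition `V`. -/
lemma tight_K4 (hE : isEdgeSet E) (hC5 : ¬ hasC5 E) {δ : ℕ}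
    (hδ : ∀ u v : Fin n, (link E u v).Nonempty → δ ≤ (link E u v).card)
    (hn : n = 2 * δ) {p q r s : Fin n} (hK4 : isK4 E p q r s) :
    (link E p q).card = δ ∧ (∀ v, v ∈ link E p q ↔ v ∉ link E r s) := by
  classical
  obtain ⟨hpq, hpr, hps, hqr, hqs, hrs, e1, e2, e3, e4⟩ := id hK4
  have I1 := pairing_ineq hE hC5 hK4
  have I2 := pairing_ineq hE hC5 (K4_perm1 hK4)
  have I3 := pairing_ineq hE hC5 (K4_perm2 hK4)
  rw [link_comm s q, link_comm r q] at I2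
  rw [link_comm s r] at I3
  have L1 : δ ≤ (link E p q).card := link_pos hδ e1
  have L2 : δ ≤ (link E p r).card := link_pos hδ (E_perm e1).1
  have L3 : δ ≤ (link E p s).card := link_pos hδ (E_perm e2).1
  have L4 : δ ≤ (link E q r).card := link_pos hδ (E_perm e1).2.2.1
  have L5 : δ ≤ (link E q s).card := link_pos hδ (E_perm e2).2.2.1
  have L6 : δ ≤ (link E r s).card := link_pos hδ (E_perm e3).2.2.1
  -- all cards are δ and the three cross-intersections have equal size
  have hc1 : (link E p q).card = δ := by omega
  have hc2 : (link E p r).card = δ := by omega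
  have hc3 : (link E p s).card = δ := by omega
  have hc4 : (link E q r).card = δ := by omega
  have hc5 : (link E q s).card = δ := by omega
  have hc6 : (link E r s).card = δ := by omega
  -- the universe facts: each A ∪ X ∪ Y covers everything
  have univ_of : ∀ A X Y : Finset (Fin n),
      (∀ w ∈ A, w ∉ X) → (∀ w ∈ A, w ∉ Y) →
      n ≤ A.card + X.card + Y.card - (X ∩ Y).card → ∀ v : Fin n, v ∈ A ∪ X ∪ Y := by
    intro A X Y hAX hAY hcard v
    have hXY := Finset.card_union_add_card_inter X Y
    have hdisj : Disjoint A (X ∪ Y) := by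
      rw [Finset.disjoint_left]
      intro w hw hw'
      rcases Finset.mem_union.mp hw' with h | h
      exacts [hAX w hw h, hAY w hw h]
    have hAXY : (A ∪ (X ∪ Y)).card = A.card + (X ∪ Y).card :=
      Finset.card_union_of_disjoint hdisj
    have h2 : (X ∩ Y).card ≤ X.card := Finset.card_le_card (Finset.inter_subset_left)
    have huniv : A ∪ (X ∪ Y) = Finset.univ := by
      apply Finset.eq_univ_of_card
      have hle := Finset.card_le_univ (A ∪ (X ∪ Y))
      simp only [Finset.card_univ, Fintype.card_fin] at hle ⊢
      omega
    rw [Finset.union_assoc]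
    rw [huniv]
    exact Finset.mem_univ v
  have U1 : ∀ v : Fin n, v ∈ (link E p q ∩ link E r s) ∪ link E p r ∪ link E q s := by
    refine univ_of _ _ _ ?_ ?_ ?_
    · intro w hw
      obtain ⟨hw1, hw2⟩ := Finset.mem_inter.mp hw
      exact (M_not_mixed hE hC5 hK4 hw1 hw2).1
    · intro w hw
      obtain ⟨hw1, hw2⟩ := Finset.mem_inter.mp hw
      exact (M_not_mixed hE hC5 hK4 hw1 hw2).2.2.2
    · omega
  have U2 : ∀ v : Fin n, v ∈ (link E p r ∩ link E q s) ∪ link E p s ∪ link E q r := by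
    refine univ_of _ _ _ ?_ ?_ ?_
    · intro w hw
      obtain ⟨hw1, hw2⟩ := Finset.mem_inter.mp hw
      have := M_not_mixed hE hC5 (K4_perm1 hK4) hw1 ((link_comm q s) ▸ hw2)
      exact this.1
    · intro w hw
      obtain ⟨hw1, hw2⟩ := Finset.mem_inter.mp hw
      have := M_not_mixed hE hC5 (K4_perm1 hK4) hw1 ((link_comm q s) ▸ hw2)
      exact fun h => this.2.2.2 ((link_comm q r) ▸ h)
    · omega
  have U3 : ∀ v : Fin n, v ∈ (link E p s ∩ link E q r) ∪ link E p q ∪ link E r s := by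
    refine univ_of _ _ _ ?_ ?_ ?_
    · intro w hw
      obtain ⟨hw1, hw2⟩ := Finset.mem_inter.mp hw
      have := M_not_mixed hE hC5 (K4_perm2 hK4) hw1 ((link_comm q r) ▸ hw2)
      exact this.1
    · intro w hw
      obtain ⟨hw1, hw2⟩ := Finset.mem_inter.mp hw
      have := M_not_mixed hE hC5 (K4_perm2 hK4) hw1 ((link_comm q r) ▸ hw2)
      exact fun h => this.2.2.2 ((link_comm r s) ▸ h)
    · omega
  -- M_α is empty
  have hMa : ∀ v, v ∈ link E p q → v ∈ link E r s → False := by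
    intro v h1 h2
    have hmix := M_not_mixed hE hC5 hK4 h1 h2
    rcases Finset.mem_union.mp (U2 v) with h | h
    · rcases Finset.mem_union.mp h with h | h
      · exact hmix.1 (Finset.mem_inter.mp h).1
      · exact hmix.2.1 h
    · exact hmix.2.2.1 h
  -- M_γ is empty
  have hMc : ∀ v, v ∈ link E p s → v ∈ link E q r → False := by
    intro v h1 h2
    have hmix := M_not_mixed hE hC5 (K4_perm2 hK4) h1 ((link_comm q r) ▸ h2)
    rcases Finset.mem_union.mp (U1 v) with h | h
    · rcases Finset.mem_union.mp h with h | h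
      · exact hmix.1 (Finset.mem_inter.mp h).1
      · exact hmix.2.1 h
    · exact hmix.2.2.1 ((link_comm s q) ▸ h)
  refine ⟨hc1, fun v => ⟨fun h1 h2 => hMa v h1 h2, fun h2 => ?_⟩⟩
  rcases Finset.mem_union.mp (U3 v) with h | h
  · rcases Finset.mem_union.mp h with h | h
    · obtain ⟨ha, hb⟩ := Finset.mem_inter.mp h
      exact absurd (hMc v ha hb) (by tauto)
    · exact h
  · exact absurd h h2


/-- all three partitions at a tight K4 -/
lemma tight_parts (hE : isEdgeSet E) (hC5 : ¬ hasC5 E) {δ : ℕ}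
    (hδ : ∀ u v : Fin n, (link E u v).Nonempty → δ ≤ (link E u v).card)
    (hn : n = 2 * δ) {p q r s : Fin n} (hK4 : isK4 E p q r s) :
    (∀ v, v ∈ link E p q ↔ v ∉ link E r s) ∧
    (∀ v, v ∈ link E p r ↔ v ∉ link E q s) ∧
    (∀ v, v ∈ link E p s ↔ v ∉ link E q r) :=
  ⟨(tight_K4 hE hC5 hδ hn hK4).2,
   (tight_K4 hE hC5 hδ hn (K4_swap23 hK4)).2,
   (tight_K4 hE hC5 hδ hn (K4_swap23 (K4_swap34 hK4))).2⟩

/-- handshake: if every `v ∈ B` has exactly `c` neighbours in `B` through `x`,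
then `|B| * c` is even -/
lemma handshake (hE : isEdgeSet E) (B : Finset (Fin n)) (x : Fin n) (c : ℕ)
    (hc : ∀ v ∈ B, (B.filter (fun v' => v' ∈ link E v x)).card = c) :
    Even (B.card * c) := by
  classical
  let G : SimpleGraph (Fin n) :=
    { Adj := fun a b => a ∈ B ∧ b ∈ B ∧ b ∈ link E a x
      symm := by
        constructor
        intro a b ⟨ha, hb, hab⟩
        exact ⟨hb, ha, (link_rot hab).2.2.1⟩
      loopless := by
        constructor
        intro a ⟨_, _, ha⟩
        exact (link_ne_left hE ha) rfl }
  letI : DecidableRel G.Adj := fun a b => Classical.dec _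
  have hdeg : ∀ v ∈ B, G.degree v = c := by
    intro v hv
    rw [← hc v hv]
    unfold SimpleGraph.degree
    congr 1
    ext w
    simp only [SimpleGraph.mem_neighborFinset, Finset.mem_filter]
    constructor
    · rintro ⟨_, hw, hwl⟩; exact ⟨hw, hwl⟩
    · rintro ⟨hw, hwl⟩; exact ⟨hv, hw, hwl⟩
  have hdeg0 : ∀ v ∈ Finset.univ, v ∉ B → G.degree v = 0 := by
    intro v _ hv
    rw [← Finset.card_empty]
    unfold SimpleGraph.degree
    congr 1
    ext w
    simp only [SimpleGraph.mem_neighborFinset, Finset.notMem_empty, iff_false]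
    rintro ⟨ha, _, _⟩
    exact hv ha
  have hsum := SimpleGraph.sum_degrees_eq_twice_card_edges G
  have : ∑ v ∈ Finset.univ, G.degree v = ∑ v ∈ B, G.degree v := by
    rw [Finset.sum_subset (Finset.subset_univ B)]
    intro v hv hvB
    exact hdeg0 v hv hvB
  rw [this, Finset.sum_congr rfl hdeg, Finset.sum_const, smul_eq_mul] at hsum
  exact ⟨G.edgeFinset.card, by omega⟩

lemma Aset_rot {x y z w : Fin n} (h : w ∈ Aset E x y z) : w ∈ Aset E y z x := by
  rw [mem_Aset] at h ⊢
  exact ⟨h.2.1, h.2.2, h.1⟩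

lemma Aset_swap23 {x y z w : Fin n} (h : w ∈ Aset E x y z) : w ∈ Aset E x z y := by
  rw [mem_Aset] at h ⊢
  exact ⟨(link_rot h.2.2).1, (link_rot h.2.1).1, (link_rot h.1).1⟩


variable {δ : ℕ} {p q r s v t u : Fin n}

/-- a `B_p` vertex is linked to each `A_p` member through `q`, `r` and `s` -/
lemma B_to_A (hE : isEdgeSet E) (hC5 : ¬ hasC5 E)
    (hδ : ∀ u v : Fin n, (link E u v).Nonempty → δ ≤ (link E u v).card)
    (hn : n = 2 * δ) (hK4 : isK4 E p q r s)
    (hv : v ∈ Bset E p q r s) (hu : u ∈ Aset E q r s) :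
    v ∈ link E u q ∧ v ∈ link E u r ∧ v ∈ link E u s := by
  obtain ⟨hv1, hv2, hv3⟩ := mem_Bset.mp hv
  obtain ⟨P1, P2, P3⟩ := tight_parts hE hC5 hδ hn hK4
  obtain ⟨Q1, Q2, Q3⟩ := tight_parts hE hC5 hδ hn (Aset_K4 hE hK4.2.2.2.2.2.2.2.2.2 hu)
  exact ⟨(Q1 v).mpr ((P1 v).mp hv1), (Q2 v).mpr ((P2 v).mp hv2),
    (Q3 v).mpr ((P3 v).mp hv3)⟩

/-- common neighbours of a `B_p`-vertex through two of `q,r,s` lie in `A_p` -/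
lemma Bv_pair (hE : isEdgeSet E) (hC5 : ¬ hasC5 E)
    (hδ : ∀ u v : Fin n, (link E u v).Nonempty → δ ≤ (link E u v).card)
    (hn : n = 2 * δ) (hK4 : isK4 E p q r s)
    (hv : v ∈ Bset E p q r s)
    (h1 : t ∈ link E v q) (h2 : t ∈ link E v r) : t ∈ Aset E q r s := by
  obtain ⟨hpq, hpr, hps, hqr, hqs, hrs, e1, e2, e3, e4⟩ := id hK4
  obtain ⟨hv1, hv2, hv3⟩ := mem_Bset.mp hv
  obtain ⟨P1, P2, P3⟩ := tight_parts hE hC5 hδ hn hK4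
  have hvq := link_ne_right hE hv1
  have hvp := link_ne_left hE hv1
  have hvr := link_ne_right hE hv2
  have hvs := link_ne_right hE hv3
  have htv := link_ne_left hE h1
  have htq := link_ne_right hE h1
  have htr := link_ne_right hE h2
  have tpq : t ∉ link E p q := by
    intro ht
    have d1 : ({t, v, r} : Finset (Fin n)) ∈ E := (E_perm (mem_link.mp h2)).2.2.2.1
    have d2 : ({v, r, p} : Finset (Fin n)) ∈ E := (E_perm (mem_link.mp hv2)).2.2.2.2
    have d3 : ({r, p, q} : Finset (Fin n)) ∈ E := (E_perm e1).2.2.2.1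
    have d4 : ({p, q, t} : Finset (Fin n)) ∈ E := mem_link.mp ht
    have d5 : ({q, t, v} : Finset (Fin n)) ∈ E := (E_perm (mem_link.mp h1)).2.2.1
    exact C5_of hC5 htv htr (link_ne_left hE ht) htq hvr hvp hvq hpr.symm hqr.symm hpq
      d1 d2 d3 d4 d5
  have tpr : t ∉ link E p r := by
    intro ht
    have d1 : ({t, v, q} : Finset (Fin n)) ∈ E := (E_perm (mem_link.mp h1)).2.2.2.1
    have d2 : ({v, q, p} : Finset (Fin n)) ∈ E := (E_perm (mem_link.mp hv1)).2.2.2.2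
    have d3 : ({q, p, r} : Finset (Fin n)) ∈ E := (E_perm e1).2.1
    have d4 : ({p, r, t} : Finset (Fin n)) ∈ E := mem_link.mp ht
    have d5 : ({r, t, v} : Finset (Fin n)) ∈ E := (E_perm (mem_link.mp h2)).2.2.1
    exact C5_of hC5 htv htq (link_ne_left hE ht) htr hvq hvp hvr hpq.symm hqr hpr
      d1 d2 d3 d4 d5
  have trs : t ∈ link E r s := by
    by_contra h
    exact tpq ((P1 t).mpr h)
  have tqs : t ∈ link E q s := by
    by_contra h
    exact tpr ((P2 t).mpr h)
  have tps : t ∉ link E p s := by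
    intro ht
    have d1 : ({v, q, t} : Finset (Fin n)) ∈ E := mem_link.mp h1
    have d2 : ({q, t, s} : Finset (Fin n)) ∈ E := (E_perm (mem_link.mp tqs)).1
    have d3 : ({t, s, p} : Finset (Fin n)) ∈ E := (E_perm (mem_link.mp ht)).2.2.2.2
    have d4 : ({s, p, v} : Finset (Fin n)) ∈ E := (E_perm (mem_link.mp hv3)).2.1
    have d5 : ({p, v, q} : Finset (Fin n)) ∈ E := (E_perm (mem_link.mp hv1)).1
    exact C5_of hC5 hvq htv.symm hvs hvp htq.symm hqs hpq.symm (link_ne_right hE tqs)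
      (link_ne_left hE ht) hps.symm d1 d2 d3 d4 d5
  have tqr : t ∈ link E q r := by
    by_contra h
    exact tps ((P3 t).mpr h)
  exact mem_Aset.mpr ⟨tqr, trs, (link_rot tqs).1⟩

/-- each member of `A_q = Aset p r s` is linked to a `B_p`-vertex through `p` -/
lemma t_to_v (hE : isEdgeSet E) (hC5 : ¬ hasC5 E)
    (hδ : ∀ u v : Fin n, (link E u v).Nonempty → δ ≤ (link E u v).card)
    (hn : n = 2 * δ) (hK4 : isK4 E p q r s)
    (hv : v ∈ Bset E p q r s) (ht : t ∈ Aset E p r s) : t ∈ link E v p := by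
  obtain ⟨hv1, hv2, hv3⟩ := mem_Bset.mp hv
  obtain ⟨P1, P2, P3⟩ := tight_parts hE hC5 hδ hn hK4
  have K4t := Aset_K4 hE hK4.2.2.2.2.2.2.2.2.1 ht
  have part := (tight_K4 hE hC5 hδ hn K4t).2
  have hvtp : v ∈ link E t p := (part v).mpr ((P1 v).mp hv1)
  exact (link_rot hvtp).2.2.1

/-- no member of `A_p` is linked to a `B_p`-vertex through `p` -/
lemma Bv_p_avoid (hE : isEdgeSet E) (hC5 : ¬ hasC5 E)
    (hδ : ∀ u v : Fin n, (link E u v).Nonempty → δ ≤ (link E u v).card)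
    (hn : n = 2 * δ) (hK4 : isK4 E p q r s)
    (hv : v ∈ Bset E p q r s) (hu : u ∈ Aset E q r s) : u ∉ link E v p := by
  intro h
  obtain ⟨hpq, hpr, hps, hqr, hqs, hrs, e1, e2, e3, e4⟩ := id hK4
  obtain ⟨hv1, hv2, hv3⟩ := mem_Bset.mp hv
  obtain ⟨hu1, hu2, hu3⟩ := mem_Aset.mp hu
  have hvur := (B_to_A hE hC5 hδ hn hK4 hv hu).2.1
  have d1 : ({q, p, v} : Finset (Fin n)) ∈ E := (E_perm (mem_link.mp hv1)).2.1
  have d2 : ({p, v, u} : Finset (Fin n)) ∈ E := (E_perm (mem_link.mp h)).2.1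
  have d3 : ({v, u, r} : Finset (Fin n)) ∈ E := (E_perm (mem_link.mp hvur)).2.2.2.1
  have d4 : ({u, r, q} : Finset (Fin n)) ∈ E := (E_perm (mem_link.mp hu1)).2.2.2.2
  have d5 : ({r, q, p} : Finset (Fin n)) ∈ E := (E_perm e1).2.2.2.2
  exact C5_of hC5 hpq.symm (link_ne_right hE hv1).symm (link_ne_left hE hu1).symm hqr
    (link_ne_left hE hv1).symm (link_ne_right hE h).symm hpr
    (link_ne_left hE h).symm (link_ne_right hE hv2) (link_ne_right hE hu1)
    d1 d2 d3 d4 d5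

/-- members of `Aset p q x` are not linked through `q` to any `v ∈ L_px`. -/
lemma avoid1 (hE : isEdgeSet E) (hC5 : ¬ hasC5 E)
    (hδ : ∀ u v : Fin n, (link E u v).Nonempty → δ ≤ (link E u v).card)
    (hn : n = 2 * δ) {x : Fin n} (hpqx : ({p, q, x} : Finset (Fin n)) ∈ E)
    (ht : t ∈ Aset E p q x) (hvpx : v ∈ link E p x) : t ∉ link E v q := by
  intro h
  have K4t := K4_swap23 (Aset_K4 hE hpqx ht)
  have part := (tight_K4 hE hC5 hδ hn K4t).2
  exact (part v).mp ((link_rot h).2.2.1) hvpx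


/-- every vertex lies in one of the eight classes -/
lemma cover (hE : isEdgeSet E) (hC5 : ¬ hasC5 E)
    (hδ : ∀ u v : Fin n, (link E u v).Nonempty → δ ≤ (link E u v).card)
    (hn : n = 2 * δ) (hK4 : isK4 E p q r s) (w : Fin n) :
    w ∈ Aset E q r s ∨ w ∈ Aset E p r s ∨ w ∈ Aset E p q s ∨ w ∈ Aset E p q r ∨
    w ∈ Bset E p q r s ∨ w ∈ Bset E q p r s ∨ w ∈ Bset E r p q s ∨
    w ∈ Bset E s p q r := by
  obtain ⟨P1, P2, P3⟩ := tight_parts hE hC5 hδ hn hK4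
  by_cases h1 : w ∈ link E p q <;> by_cases h2 : w ∈ link E p r <;>
    by_cases h3 : w ∈ link E p s
  · exact Or.inr (Or.inr (Or.inr (Or.inr (Or.inl (mem_Bset.mpr ⟨h1, h2, h3⟩)))))
  · have h4 : w ∈ link E q r := by by_contra hc; exact h3 ((P3 w).mpr hc)
    exact Or.inr (Or.inr (Or.inr (Or.inl (mem_Aset.mpr ⟨h1, h4, (link_rot h2).1⟩))))
  · have h4 : w ∈ link E q s := by by_contra hc; exact h2 ((P2 w).mpr hc)
    exact Or.inr (Or.inr (Or.inl (mem_Aset.mpr ⟨h1, h4, (link_rot h3).1⟩)))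
  · have h4 : w ∈ link E q s := by by_contra hc; exact h2 ((P2 w).mpr hc)
    have h5 : w ∈ link E q r := by by_contra hc; exact h3 ((P3 w).mpr hc)
    exact Or.inr (Or.inr (Or.inr (Or.inr (Or.inr (Or.inl
      (mem_Bset.mpr ⟨(link_rot h1).1, h5, h4⟩))))))
  · have h4 : w ∈ link E r s := by by_contra hc; exact h1 ((P1 w).mpr hc)
    exact Or.inr (Or.inl (mem_Aset.mpr ⟨h2, h4, (link_rot h3).1⟩))
  · have h4 : w ∈ link E r s := by by_contra hc; exact h1 ((P1 w).mpr hc)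
    have h5 : w ∈ link E q r := by by_contra hc; exact h3 ((P3 w).mpr hc)
    exact Or.inr (Or.inr (Or.inr (Or.inr (Or.inr (Or.inr (Or.inl
      (mem_Bset.mpr ⟨(link_rot h2).1, (link_rot h5).1, h4⟩)))))))
  · have h4 : w ∈ link E r s := by by_contra hc; exact h1 ((P1 w).mpr hc)
    have h5 : w ∈ link E q s := by by_contra hc; exact h2 ((P2 w).mpr hc)
    exact Or.inr (Or.inr (Or.inr (Or.inr (Or.inr (Or.inr (Or.inr
      (mem_Bset.mpr ⟨(link_rot h3).1, (link_rot h5).1, (link_rot h4).1⟩)))))))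
  · have h4 : w ∈ link E r s := by by_contra hc; exact h1 ((P1 w).mpr hc)
    have h5 : w ∈ link E q s := by by_contra hc; exact h2 ((P2 w).mpr hc)
    have h6 : w ∈ link E q r := by by_contra hc; exact h3 ((P3 w).mpr hc)
    exact Or.inl (mem_Aset.mpr ⟨h6, h4, (link_rot h5).1⟩)

lemma Aset_comm23 (x y z : Fin n) : Aset E x y z = Aset E x z y := by
  ext w
  exact ⟨Aset_swap23, Aset_swap23⟩

lemma Aset_rot_eq (x y z : Fin n) : Aset E x y z = Aset E y z x := by
  ext w
  exact ⟨Aset_rot, fun h => Aset_rot (Aset_rot h)⟩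

lemma Bset_comm34 (w x y z : Fin n) : Bset E w x y z = Bset E w x z y := by
  ext v
  rw [mem_Bset, mem_Bset]
  tauto

lemma Bset_comm23 (w x y z : Fin n) : Bset E w x y z = Bset E w y x z := by
  ext v
  rw [mem_Bset, mem_Bset]
  tauto

/-- composition of `L_qr` when `B_q` and `B_r` are empty -/
lemma comp_qr (hE : isEdgeSet E) (hC5 : ¬ hasC5 E)
    (hδ : ∀ u v : Fin n, (link E u v).Nonempty → δ ≤ (link E u v).card)
    (hn : n = 2 * δ) (hK4 : isK4 E p q r s)
    (hBq : ∀ w, w ∉ Bset E q p r s) (hBr : ∀ w, w ∉ Bset E r p q s) :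
    (link E q r).card = (Aset E p q r).card + (Aset E q r s).card := by
  obtain ⟨P1, P2, P3⟩ := tight_parts hE hC5 hδ hn hK4
  have hset : link E q r = Aset E p q r ∪ Aset E q r s := by
    ext w
    simp only [Finset.mem_union]
    constructor
    · intro hw
      have hkill : w ∉ link E p s := fun hps => (P3 w).mp hps hw
      rcases cover hE hC5 hδ hn hK4 w with hA | hA | hA | hA | hB | hB | hB | hB
      · exact Or.inr hA
      · exact absurd ((link_rot (mem_Aset.mp hA).2.2).1) hkill
      · exact absurd ((link_rot (mem_Aset.mp hA).2.2).1) hkill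
      · exact Or.inl hA
      · exact absurd (mem_Bset.mp hB).2.2 hkill
      · exact absurd hB (hBq w)
      · exact absurd hB (hBr w)
      · exact absurd ((link_rot (mem_Bset.mp hB).1).1) hkill
    · rintro (hA | hA)
      · exact (mem_Aset.mp hA).2.1
      · exact (mem_Aset.mp hA).1
  rw [hset, Finset.card_union_of_disjoint]
  rw [Finset.disjoint_left]
  intro w hw hw'
  exact (P1 w).mp (mem_Aset.mp hw).1 (mem_Aset.mp hw').2.1

/-- composition of `L_pq` when `B_q` is empty -/
lemma comp_pq (hE : isEdgeSet E) (hC5 : ¬ hasC5 E)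
    (hδ : ∀ u v : Fin n, (link E u v).Nonempty → δ ≤ (link E u v).card)
    (hn : n = 2 * δ) (hK4 : isK4 E p q r s)
    (hBq : ∀ w, w ∉ Bset E q p r s) :
    (link E p q).card
      = (Aset E p q r).card + (Aset E p q s).card + (Bset E p q r s).card := by
  obtain ⟨P1, P2, P3⟩ := tight_parts hE hC5 hδ hn hK4
  have hset : link E p q = (Aset E p q r ∪ Aset E p q s) ∪ Bset E p q r s := by
    ext w
    simp only [Finset.mem_union]
    constructor
    · intro hw
      have hkill : w ∉ link E r s := (P1 w).mp hw
      rcases cover hE hC5 hδ hn hK4 w with hA | hA | hA | hA | hB | hB | hB | hB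
      · exact absurd (mem_Aset.mp hA).2.1 hkill
      · exact absurd (mem_Aset.mp hA).2.1 hkill
      · exact Or.inl (Or.inr hA)
      · exact Or.inl (Or.inl hA)
      · exact Or.inr hB
      · exact absurd hB (hBq w)
      · exact absurd (mem_Bset.mp hB).2.2 hkill
      · exact absurd ((link_rot (mem_Bset.mp hB).2.2).1) hkill
    · rintro ((hA | hA) | hB)
      · exact (mem_Aset.mp hA).1
      · exact (mem_Aset.mp hA).1
      · exact (mem_Bset.mp hB).1
  rw [hset, Finset.card_union_of_disjoint, Finset.card_union_of_disjoint]
  · rw [Finset.disjoint_left]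
    intro w hw hw'
    exact (P3 w).mp ((link_rot (mem_Aset.mp hw').2.2).1) (mem_Aset.mp hw).2.1
  · rw [Finset.disjoint_left]
    intro w hw hw'
    rcases Finset.mem_union.mp hw with hA | hA
    · exact (P3 w).mp (mem_Bset.mp hw').2.2 (mem_Aset.mp hA).2.1
    · exact (P2 w).mp (mem_Bset.mp hw').2.1 (mem_Aset.mp hA).2.1


/-- if `B_p` is nonempty then `A_p` is large: `δ + 4 ≤ 2|A_p|` -/
lemma bigA (hE : isEdgeSet E) (hC5 : ¬ hasC5 E)
    (hδ : ∀ u v : Fin n, (link E u v).Nonempty → δ ≤ (link E u v).card)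
    (hn : n = 2 * δ) (hK4 : isK4 E p q r s) (hv : v ∈ Bset E p q r s) :
    δ + 4 ≤ 2 * (Aset E q r s).card := by
  obtain ⟨hpq, hpr, hps, hqr, hqs, hrs, e1, e2, e3, e4⟩ := id hK4
  obtain ⟨hv1, hv2, hv3⟩ := mem_Bset.mp hv
  obtain ⟨P1, P2, P3⟩ := tight_parts hE hC5 hδ hn hK4
  have hnotrs : v ∉ link E r s := (P1 v).mp hv1
  have hnotqs : v ∉ link E q s := (P2 v).mp hv2
  have hnotqr : v ∉ link E q r := (P3 v).mp hv3
  have hv' : v ∈ Bset E p q s r := mem_Bset.mpr ⟨hv1, hv3, hv2⟩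
  have hv'' : v ∈ Bset E p r s q := mem_Bset.mpr ⟨hv2, hv3, hv1⟩
  have hXY : link E v q ∩ link E v r = Aset E q r s := by
    apply Finset.Subset.antisymm
    · intro t ht
      obtain ⟨t1, t2⟩ := Finset.mem_inter.mp ht
      exact Bv_pair hE hC5 hδ hn hK4 hv t1 t2
    · intro u' hu
      have h := B_to_A hE hC5 hδ hn hK4 hv hu
      exact Finset.mem_inter.mpr ⟨(link_rot h.1).2.2.1, (link_rot h.2.1).2.2.1⟩
  have hXZ : link E v q ∩ link E v s = Aset E q r s := by
    apply Finset.Subset.antisymm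
    · intro t ht
      obtain ⟨t1, t2⟩ := Finset.mem_inter.mp ht
      exact Aset_swap23 (Bv_pair hE hC5 hδ hn (K4_swap34 hK4) hv' t1 t2)
    · intro u' hu
      have h := B_to_A hE hC5 hδ hn hK4 hv hu
      exact Finset.mem_inter.mpr ⟨(link_rot h.1).2.2.1, (link_rot h.2.2).2.2.1⟩
  have hYZ : link E v r ∩ link E v s = Aset E q r s := by
    apply Finset.Subset.antisymm
    · intro t ht
      obtain ⟨t1, t2⟩ := Finset.mem_inter.mp ht
      exact Aset_rot (Aset_rot (Bv_pair hE hC5 hδ hn (K4_perm1 hK4) hv'' t1 t2))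
    · intro u' hu
      have h := B_to_A hE hC5 hδ hn hK4 hv hu
      exact Finset.mem_inter.mpr ⟨(link_rot h.2.1).2.2.1, (link_rot h.2.2).2.2.1⟩
  have c1 := Finset.card_union_add_card_inter (link E v q) (link E v r)
  have hdist : (link E v q ∪ link E v r) ∩ link E v s = Aset E q r s := by
    rw [Finset.union_inter_distrib_right, hXZ, hYZ, Finset.union_self]
  have c2 := Finset.card_union_add_card_inter (link E v q ∪ link E v r) (link E v s)
  rw [hXY] at c1
  rw [hdist] at c2
  have hvU : v ∉ link E v q ∪ link E v r ∪ link E v s := by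
    simp only [Finset.mem_union]
    push_neg
    exact ⟨⟨not_mem_link_self_left hE v q, not_mem_link_self_left hE v r⟩,
      not_mem_link_self_left hE v s⟩
  have hqU : q ∉ link E v q ∪ link E v r ∪ link E v s := by
    simp only [Finset.mem_union]
    push_neg
    exact ⟨⟨not_mem_link_self_right hE v q,
      fun h => hnotqr ((link_rot h).2.2.1)⟩, fun h => hnotqs ((link_rot h).2.2.1)⟩
  have hrU : r ∉ link E v q ∪ link E v r ∪ link E v s := by
    simp only [Finset.mem_union]
    push_neg
    exact ⟨⟨fun h => hnotqr ((link_rot h).2.1), not_mem_link_self_right hE v r⟩,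
      fun h => hnotrs ((link_rot h).2.2.1)⟩
  have hsU : s ∉ link E v q ∪ link E v r ∪ link E v s := by
    simp only [Finset.mem_union]
    push_neg
    exact ⟨⟨fun h => hnotqs ((link_rot h).2.1), fun h => hnotrs ((link_rot h).2.1)⟩,
      not_mem_link_self_right hE v s⟩
  have hins : (insert v (insert q (insert r (insert s
      (link E v q ∪ link E v r ∪ link E v s))))).card ≤ n := by
    have := Finset.card_le_univ (insert v (insert q (insert r (insert s
      (link E v q ∪ link E v r ∪ link E v s)))))
    simpa using this
  rw [Finset.card_insert_of_notMem (by
        simp only [Finset.mem_insert]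
        push_neg
        exact ⟨link_ne_right hE hv1, link_ne_right hE hv2, link_ne_right hE hv3, hvU⟩),
      Finset.card_insert_of_notMem (by
        simp only [Finset.mem_insert]
        push_neg
        exact ⟨hqr, hqs, hqU⟩),
      Finset.card_insert_of_notMem (by
        simp only [Finset.mem_insert]
        push_neg
        exact ⟨hrs, hrU⟩),
      Finset.card_insert_of_notMem hsU] at hins
  have LX : δ ≤ (link E v q).card :=
    hδ v q ⟨p, mem_link.mpr ((E_perm (mem_link.mp hv1)).2.2.2.2)⟩
  have LY : δ ≤ (link E v r).card :=
    hδ v r ⟨p, mem_link.mpr ((E_perm (mem_link.mp hv2)).2.2.2.2)⟩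
  have LZ : δ ≤ (link E v s).card :=
    hδ v s ⟨p, mem_link.mpr ((E_perm (mem_link.mp hv3)).2.2.2.2)⟩
  omega

/-- two different B-sets cannot both be nonempty -/
lemma twoB (hE : isEdgeSet E) (hC5 : ¬ hasC5 E)
    (hδ : ∀ u v : Fin n, (link E u v).Nonempty → δ ≤ (link E u v).card)
    (hn : n = 2 * δ) (hK4 : isK4 E p q r s)
    (h1 : v ∈ Bset E p q r s) (h2 : u ∈ Bset E q p r s) : False := by
  obtain ⟨P1, P2, P3⟩ := tight_parts hE hC5 hδ hn hK4
  have b1 := bigA hE hC5 hδ hn hK4 h1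
  have b2 := bigA hE hC5 hδ hn (K4_swap12 hK4) h2
  have hcrs : (link E r s).card = δ :=
    (tight_K4 hE hC5 hδ hn (K4_swap23 (K4_swap12 (K4_perm1 hK4)))).1
  have hsub : Aset E q r s ∪ Aset E p r s ⊆ link E r s := by
    intro w hw
    rcases Finset.mem_union.mp hw with h | h
    · exact (mem_Aset.mp h).2.1
    · exact (mem_Aset.mp h).2.1
  have hdisj : Disjoint (Aset E q r s) (Aset E p r s) := by
    rw [Finset.disjoint_left]
    intro w hw hw'
    exact (P3 w).mp ((link_rot (mem_Aset.mp hw').2.2).1) (mem_Aset.mp hw).1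
  have := Finset.card_le_card hsub
  rw [Finset.card_union_of_disjoint hdisj, hcrs] at this
  omega


/-- the main tight-case contradiction when exactly `B_p` is (possibly) nonempty -/
lemma oneB_contra (hE : isEdgeSet E) (hC5 : ¬ hasC5 E)
    (hδ : ∀ u v : Fin n, (link E u v).Nonempty → δ ≤ (link E u v).card)
    (hn : n = 2 * δ) (hodd : δ % 2 = 1) (hK4 : isK4 E p q r s)
    (hBp : v ∈ Bset E p q r s)
    (hBq : ∀ w, w ∉ Bset E q p r s) (hBr : ∀ w, w ∉ Bset E r p q s)
    (hBs : ∀ w, w ∉ Bset E s p q r) : False := by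
  classical
  obtain ⟨hpq, hpr, hps, hqr, hqs, hrs, e1, e2, e3, e4⟩ := id hK4
  obtain ⟨P1, P2, P3⟩ := tight_parts hE hC5 hδ hn hK4
  -- tight cardinalities of the six links
  have hLpq : (link E p q).card = δ := (tight_K4 hE hC5 hδ hn hK4).1
  have hLqr : (link E q r).card = δ :=
    (tight_K4 hE hC5 hδ hn (K4_swap23 (K4_swap12 hK4))).1
  have hLqs : (link E q s).card = δ :=
    (tight_K4 hE hC5 hδ hn (K4_swap23 (K4_swap12 (K4_swap34 hK4)))).1
  have hLrs : (link E r s).card = δ :=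
    (tight_K4 hE hC5 hδ hn (K4_swap23 (K4_swap12 (K4_perm1 hK4)))).1
  -- compositions
  have Eqr := comp_qr hE hC5 hδ hn hK4 hBq hBr
  have Eqs : (link E q s).card = (Aset E p q s).card + (Aset E q r s).card := by
    have h := comp_qr hE hC5 hδ hn (K4_swap34 hK4)
      (fun w hw => hBq w ((Bset_comm34 q p s r) ▸ hw)) hBs
    rw [Aset_comm23 q s r] at h
    exact h
  have Ers : (link E r s).card = (Aset E p r s).card + (Aset E q r s).card := by
    have h := comp_qr hE hC5 hδ hn (K4_perm1 hK4)
      (fun w hw => hBr w ((Bset_comm34 r p s q) ▸ hw))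
      (fun w hw => hBs w ((Bset_comm34 s p r q) ▸ hw))
    rw [Aset_rot_eq r s q, Aset_rot_eq s q r] at h
    exact h
  have Epq := comp_pq hE hC5 hδ hn hK4 hBq
  -- members of `A_q` have empty link with `q`
  have hdkill : ∀ t', t' ∈ Aset E p r s → link E t' q = ∅ := by
    intro t' ht'
    by_cases htq : t' = q
    · subst htq
      ext w
      simp only [Finset.notMem_empty, iff_false]
      intro hw
      exact (edge_ne hE (mem_link.mp hw)).1 rfl
    rw [← Finset.not_nonempty_iff_eq_empty]
    intro hne
    have hcard := hδ t' q hne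
    have ht1 : t' ∈ link E p r := (mem_Aset.mp ht').1
    have ht2 : t' ∈ link E r s := (mem_Aset.mp ht').2.1
    have ht3 : t' ∈ link E p s := (link_rot (mem_Aset.mp ht').2.2).1
    have hsub : link E t' q
        ⊆ ((Aset E p r s ∪ Bset E p q r s).erase q).erase t' := by
      intro w hw
      have hwAp : w ∉ Aset E q r s := by
        intro hA
        exact (((tight_K4 hE hC5 hδ hn (Aset_K4 hE e4 hA)).2) t').mp
          ((link_rot hw).2.2.1) ht2
      have hwAr : w ∉ Aset E p q s := fun hA => avoid1 hE hC5 hδ hn e2 hA ht3 hw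
      have hwAs : w ∉ Aset E p q r := fun hA => avoid1 hE hC5 hδ hn e1 hA ht1 hw
      refine Finset.mem_erase.mpr ⟨link_ne_left hE hw, ?_⟩
      · exact Finset.mem_erase.mpr ⟨link_ne_right hE hw, by
          rcases cover hE hC5 hδ hn hK4 w with h | h | h | h | h | h | h | h
          · exact absurd h hwAp
          · exact Finset.mem_union_left _ h
          · exact absurd h hwAr
          · exact absurd h hwAs
          · exact Finset.mem_union_right _ h
          · exact absurd h (hBq w)
          · exact absurd h (hBr w)
          · exact absurd h (hBs w)⟩
    have hAB : Disjoint (Aset E p r s) (Bset E p q r s) := by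
      rw [Finset.disjoint_left]
      intro w hw hw'
      exact (P1 w).mp (mem_Bset.mp hw').1 (mem_Aset.mp hw).2.1
    have hqA : q ∈ Aset E p r s := by
      refine mem_Aset.mpr ⟨mem_link.mpr (E_perm e1).1, mem_link.mpr (E_perm e4).2.2.1,
        mem_link.mpr (E_perm e2).2.2.2.1⟩
    have hc1 := Finset.card_le_card hsub
    rw [Finset.card_erase_of_mem (Finset.mem_erase.mpr
        ⟨htq, Finset.mem_union_left _ ht'⟩),
      Finset.card_erase_of_mem (Finset.mem_union_left _ hqA),
      Finset.card_union_of_disjoint hAB] at hc1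
    omega
  -- the per-vertex exact counts
  have key : ∀ v', v' ∈ Bset E p q r s →
      (Bset E p q r s ∩ link E v' q).card + (Aset E q r s).card = δ ∧
      (Bset E p q r s ∩ link E v' p).card
        + ((Aset E p r s).card + ((Aset E p q s).card + (Aset E p q r).card)) = δ := by
    intro v' hv'
    obtain ⟨hv1, hv2, hv3⟩ := mem_Bset.mp hv'
    -- composition of L_{v'q}
    have hsetq : link E v' q = Aset E q r s ∪ (Bset E p q r s ∩ link E v' q) := by
      ext w
      constructor
      · intro hw
        have hwAq : w ∉ Aset E p r s := by
          intro hA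
          have := hdkill w hA
          have hvm : v' ∈ link E w q := (link_rot hw).2.2.1
          rw [this] at hvm
          exact absurd hvm (Finset.notMem_empty v')
        have hwAr : w ∉ Aset E p q s := fun hA => avoid1 hE hC5 hδ hn e2 hA hv3 hw
        have hwAs : w ∉ Aset E p q r := fun hA => avoid1 hE hC5 hδ hn e1 hA hv2 hw
        rcases cover hE hC5 hδ hn hK4 w with h | h | h | h | h | h | h | h
        · exact Finset.mem_union_left _ h
        · exact absurd h hwAq
        · exact absurd h hwAr
        · exact absurd h hwAs
        · exact Finset.mem_union_right _ (Finset.mem_inter.mpr ⟨h, hw⟩)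
        · exact absurd h (hBq w)
        · exact absurd h (hBr w)
        · exact absurd h (hBs w)
      · intro hw
        rcases Finset.mem_union.mp hw with h | h
        · exact (link_rot (B_to_A hE hC5 hδ hn hK4 hv' h).1).2.2.1
        · exact (Finset.mem_inter.mp h).2
    have hdisjq : Disjoint (Aset E q r s) (Bset E p q r s ∩ link E v' q) := by
      rw [Finset.disjoint_left]
      intro w hw hw'
      exact (P1 w).mp (mem_Bset.mp (Finset.mem_inter.mp hw').1).1 (mem_Aset.mp hw).2.1
    -- composition of L_{v'p}
    have hsetp : link E v' p
        = (Aset E p r s ∪ (Aset E p q s ∪ Aset E p q r))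
          ∪ (Bset E p q r s ∩ link E v' p) := by
      ext w
      constructor
      · intro hw
        have hwAp : w ∉ Aset E q r s := fun hA =>
          Bv_p_avoid hE hC5 hδ hn hK4 hv' hA hw
        rcases cover hE hC5 hδ hn hK4 w with h | h | h | h | h | h | h | h
        · exact absurd h hwAp
        · exact Finset.mem_union_left _ (Finset.mem_union_left _ h)
        · exact Finset.mem_union_left _ (Finset.mem_union_right _
            (Finset.mem_union_left _ h))
        · exact Finset.mem_union_left _ (Finset.mem_union_right _
            (Finset.mem_union_right _ h))
        · exact Finset.mem_union_right _ (Finset.mem_inter.mpr ⟨h, hw⟩)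
        · exact absurd h (hBq w)
        · exact absurd h (hBr w)
        · exact absurd h (hBs w)
      · intro hw
        rcases Finset.mem_union.mp hw with h | h
        · rcases Finset.mem_union.mp h with h | h
          · exact t_to_v hE hC5 hδ hn hK4 hv' h
          · rcases Finset.mem_union.mp h with h | h
            · exact t_to_v hE hC5 hδ hn (K4_swap23 hK4)
                (mem_Bset.mpr ⟨hv2, hv1, hv3⟩) h
            · exact t_to_v hE hC5 hδ hn (K4_perm2 hK4)
                (mem_Bset.mpr ⟨hv3, hv1, hv2⟩) h
        · exact (Finset.mem_inter.mp h).2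
    -- K4 containing (v', p) and (v', q)
    have hLvp : δ ≤ (link E v' p).card :=
      hδ v' p ⟨q, mem_link.mpr ((E_perm (mem_link.mp hv1)).2.2.2.1)⟩
    have hLvq : δ ≤ (link E v' q).card :=
      hδ v' q ⟨p, mem_link.mpr ((E_perm (mem_link.mp hv1)).2.2.2.2)⟩
    have hw0 : 0 < (link E v' p ∩ link E v' q).card := by
      have := count_key (A := (∅ : Finset (Fin n))) (X := link E v' p)
        (Y := link E v' q) (c := v') (by simp) (by simp) (by simp)
        (not_mem_link_self_left hE v' p) (not_mem_link_self_left hE v' q)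
      simp only [Finset.card_empty] at this
      omega
    obtain ⟨w₀, hw0m⟩ := Finset.card_pos.mp hw0
    obtain ⟨h01, h02⟩ := Finset.mem_inter.mp hw0m
    have hw0B : w₀ ∈ Bset E p q r s := by
      have := hsetq ▸ h02
      rcases Finset.mem_union.mp this with h | h
      · exact absurd h01 (Bv_p_avoid hE hC5 hδ hn hK4 hv' h)
      · exact (Finset.mem_inter.mp h).1
    have K4v : isK4 E v' p q w₀ :=
      isK4_mk (link_ne_left hE hv1) (link_ne_right hE hv1)
        (link_ne_left hE h01).symm hpq (link_ne_right hE h01).symm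
        (link_ne_right hE h02).symm
        ((E_perm (mem_link.mp hv1)).2.2.2.1)
        (mem_link.mp h01) (mem_link.mp h02)
        (mem_link.mp (mem_Bset.mp hw0B).1)
    have hcvp : (link E v' p).card = δ := (tight_K4 hE hC5 hδ hn K4v).1
    have hcvq : (link E v' q).card = δ := (tight_K4 hE hC5 hδ hn (K4_swap23 K4v)).1
    constructor
    · have := hcvq
      rw [hsetq, Finset.card_union_of_disjoint hdisjq] at this
      omega
    · have := hcvp
      have d1 : Disjoint (Aset E p r s) (Aset E p q s ∪ Aset E p q r) := by
        rw [Finset.disjoint_left]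
        intro w hw hw'
        rcases Finset.mem_union.mp hw' with h | h
        · exact (P1 w).mp (mem_Aset.mp h).1 (mem_Aset.mp hw).2.1
        · exact (P1 w).mp (mem_Aset.mp h).1 (mem_Aset.mp hw).2.1
      have d2 : Disjoint (Aset E p q s) (Aset E p q r) := by
        rw [Finset.disjoint_left]
        intro w hw hw'
        exact (P3 w).mp ((link_rot (mem_Aset.mp hw).2.2).1) (mem_Aset.mp hw').2.1
      have d3 : Disjoint (Aset E p r s ∪ (Aset E p q s ∪ Aset E p q r))
          (Bset E p q r s ∩ link E v' p) := by
        rw [Finset.disjoint_left]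
        intro w hw hw'
        have hwB := (Finset.mem_inter.mp hw').1
        rcases Finset.mem_union.mp hw with h | h
        · exact (P1 w).mp (mem_Bset.mp hwB).1 (mem_Aset.mp h).2.1
        · rcases Finset.mem_union.mp h with h | h
          · exact (P2 w).mp (mem_Bset.mp hwB).2.1 (mem_Aset.mp h).2.1
          · exact (P3 w).mp (mem_Bset.mp hwB).2.2 (mem_Aset.mp h).2.1
      rw [hsetp, Finset.card_union_of_disjoint d3,
        Finset.card_union_of_disjoint d1, Finset.card_union_of_disjoint d2] at this
      omega
  -- handshakes
  have hfilterq : ∀ v' ∈ Bset E p q r s,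
      ((Bset E p q r s).filter (fun w => w ∈ link E v' q)).card
        = δ - (Aset E q r s).card := by
    intro v' hv'
    have h := (key v' hv').1
    have : (Bset E p q r s).filter (fun w => w ∈ link E v' q)
        = Bset E p q r s ∩ link E v' q := by
      ext w
      simp [Finset.mem_inter, Finset.mem_filter]
    rw [this]
    omega
  have hfilterp : ∀ v' ∈ Bset E p q r s,
      ((Bset E p q r s).filter (fun w => w ∈ link E v' p)).card
        = δ - ((Aset E p r s).card + ((Aset E p q s).card + (Aset E p q r).card)) := by
    intro v' hv'
    have h := (key v' hv').2
    have : (Bset E p q r s).filter (fun w => w ∈ link E v' p)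
        = Bset E p q r s ∩ link E v' p := by
      ext w
      simp [Finset.mem_inter, Finset.mem_filter]
    rw [this]
    omega
  have even1 := handshake hE (Bset E p q r s) q (δ - (Aset E q r s).card) hfilterq
  have even2 := handshake hE (Bset E p q r s) p
    (δ - ((Aset E p r s).card + ((Aset E p q s).card + (Aset E p q r).card))) hfilterp
  obtain ⟨k1, k2⟩ := key v hBp
  -- final parity contradiction
  have hβodd : ¬ Even (Bset E p q r s).card := by
    rw [Nat.even_iff]
    omega
  have hαeven : Even (δ - (Aset E q r s).card) :=
    (Nat.even_mul.mp even1).resolve_left hβodd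
  have heeven : Even (δ - ((Aset E p r s).card
      + ((Aset E p q s).card + (Aset E p q r).card))) :=
    (Nat.even_mul.mp even2).resolve_left hβodd
  rw [Nat.even_iff] at hαeven heeven
  omega


/-- the tight case `n = 2δ` with `δ` odd is impossible -/
lemma tight_contra (hE : isEdgeSet E) (hC5 : ¬ hasC5 E)
    (hδ : ∀ u v : Fin n, (link E u v).Nonempty → δ ≤ (link E u v).card)
    (hn : n = 2 * δ) (hodd : δ % 2 = 1) (hEne : E.Nonempty) : False := by
  obtain ⟨p, q, r, s, hK4⟩ := exists_K4 hE hC5 hδ (by omega) hEne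
  obtain ⟨hpq, hpr, hps, hqr, hqs, hrs, e1, e2, e3, e4⟩ := id hK4
  by_cases hp : ∃ v, v ∈ Bset E p q r s
  · obtain ⟨v, hv⟩ := hp
    obtain ⟨hv1, hv2, hv3⟩ := mem_Bset.mp hv
    have hq : ∀ w, w ∉ Bset E q p r s := fun w hw => twoB hE hC5 hδ hn hK4 hv hw
    have hr : ∀ w, w ∉ Bset E r p q s := fun w hw =>
      twoB hE hC5 hδ hn (K4_swap23 hK4) (mem_Bset.mpr ⟨hv2, hv1, hv3⟩) hw
    have hs : ∀ w, w ∉ Bset E s p q r := fun w hw =>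
      twoB hE hC5 hδ hn (K4_perm2 hK4) (mem_Bset.mpr ⟨hv3, hv1, hv2⟩) hw
    exact oneB_contra hE hC5 hδ hn hodd hK4 hv hq hr hs
  · push_neg at hp
    by_cases hq : ∃ v, v ∈ Bset E q p r s
    · obtain ⟨v, hv⟩ := hq
      obtain ⟨hv1, hv2, hv3⟩ := mem_Bset.mp hv
      have hr : ∀ w, w ∉ Bset E r q p s := fun w hw =>
        twoB hE hC5 hδ hn (K4_swap23 (K4_swap12 hK4)) (mem_Bset.mpr ⟨hv2, hv1, hv3⟩) hw
      have hs : ∀ w, w ∉ Bset E s q p r := fun w hw =>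
        twoB hE hC5 hδ hn (K4_perm2 (K4_swap12 hK4)) (mem_Bset.mpr ⟨hv3, hv1, hv2⟩) hw
      exact oneB_contra hE hC5 hδ hn hodd (K4_swap12 hK4) hv hp hr hs
    · push_neg at hq
      by_cases hr : ∃ v, v ∈ Bset E r p q s
      · obtain ⟨v, hv⟩ := hr
        obtain ⟨hv1, hv2, hv3⟩ := mem_Bset.mp hv
        have hK4' : isK4 E r p q s := K4_swap12 (K4_swap23 hK4)
        have hp' : ∀ w, w ∉ Bset E p r q s := fun w hw => by
          obtain ⟨a, b, c⟩ := mem_Bset.mp hw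
          exact hp w (mem_Bset.mpr ⟨b, a, c⟩)
        have hq' : ∀ w, w ∉ Bset E q r p s := fun w hw => by
          obtain ⟨a, b, c⟩ := mem_Bset.mp hw
          exact hq w (mem_Bset.mpr ⟨b, a, c⟩)
        have hs' : ∀ w, w ∉ Bset E s r p q := fun w hw =>
          twoB hE hC5 hδ hn (K4_swap23 (K4_swap12 (K4_perm1 hK4)))
            (mem_Bset.mpr ⟨hv3, hv1, hv2⟩) hw
        exact oneB_contra hE hC5 hδ hn hodd hK4' hv hp' hq' hs'
      · push_neg at hr
        by_cases hs : ∃ v, v ∈ Bset E s p q r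
        · obtain ⟨v, hv⟩ := hs
          have hK4' : isK4 E s p q r := K4_swap12 (K4_perm2 hK4)
          have hp' : ∀ w, w ∉ Bset E p s q r := fun w hw => by
            obtain ⟨a, b, c⟩ := mem_Bset.mp hw
            exact hp w (mem_Bset.mpr ⟨b, c, a⟩)
          have hq' : ∀ w, w ∉ Bset E q s p r := fun w hw => by
            obtain ⟨a, b, c⟩ := mem_Bset.mp hw
            exact hq w (mem_Bset.mpr ⟨b, c, a⟩)
          have hr' : ∀ w, w ∉ Bset E r s p q := fun w hw => by
            obtain ⟨a, b, c⟩ := mem_Bset.mp hw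
            exact hr w (mem_Bset.mpr ⟨b, c, a⟩)
          exact oneB_contra hE hC5 hδ hn hodd hK4' hv hp' hq' hr'
        · push_neg at hs
          -- all four B-sets empty
          have hLpq : (link E p q).card = δ := (tight_K4 hE hC5 hδ hn hK4).1
          have hLqr : (link E q r).card = δ :=
            (tight_K4 hE hC5 hδ hn (K4_swap23 (K4_swap12 hK4))).1
          have hLqs : (link E q s).card = δ :=
            (tight_K4 hE hC5 hδ hn (K4_swap23 (K4_swap12 (K4_swap34 hK4)))).1
          have hLrs : (link E r s).card = δ :=
            (tight_K4 hE hC5 hδ hn (K4_swap23 (K4_swap12 (K4_perm1 hK4)))).1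
          have Eqr := comp_qr hE hC5 hδ hn hK4 hq hr
          have Eqs : (link E q s).card = (Aset E p q s).card + (Aset E q r s).card := by
            have h := comp_qr hE hC5 hδ hn (K4_swap34 hK4)
              (fun w hw => hq w ((Bset_comm34 q p s r) ▸ hw)) hs
            rw [Aset_comm23 q s r] at h
            exact h
          have Ers : (link E r s).card = (Aset E p r s).card + (Aset E q r s).card := by
            have h := comp_qr hE hC5 hδ hn (K4_perm1 hK4)
              (fun w hw => hr w ((Bset_comm34 r p s q) ▸ hw))
              (fun w hw => hs w ((Bset_comm34 s p r q) ▸ hw))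
            rw [Aset_rot_eq r s q, Aset_rot_eq s q r] at h
            exact h
          have Epq := comp_pq hE hC5 hδ hn hK4 hq
          have hB0 : (Bset E p q r s).card = 0 :=
            Finset.card_eq_zero.mpr (Finset.eq_empty_of_forall_notMem hp)
          omega

/-- upper bound, branch `n ∈ {4k, 4k+1, 4k+2}` -/
lemma upper_A {k : ℕ} (hE : isEdgeSet E) (hEne : E.Nonempty) (hC5 : ¬ hasC5 E)
    (hcase : n = 4 * k ∨ n = 4 * k + 1 ∨ n = 4 * k + 2) :
    ∃ u v : Fin n, (link E u v).Nonempty ∧ (link E u v).card ≤ 2 * k := by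
  by_contra hcon
  push_neg at hcon
  have hδ : ∀ u v : Fin n, (link E u v).Nonempty → 2 * k + 1 ≤ (link E u v).card :=
    fun u v h => hcon u v h
  have hn2 : n ≤ 2 * (2 * k + 1) := by omega
  by_cases htight : n = 4 * k + 2
  · exact tight_contra hE hC5 hδ (by omega) (by omega) hEne
  · obtain ⟨p, q, r, s, hK4⟩ := exists_K4 hE hC5 hδ hn2 hEne
    have := K4_bound hE hC5 hδ hK4
    omega

/-- upper bound, branch `n = 4k+3` -/
lemma upper_B {k : ℕ} (hE : isEdgeSet E) (hEne : E.Nonempty) (hC5 : ¬ hasC5 E)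
    (hcase : n = 4 * k + 3) :
    ∃ u v : Fin n, (link E u v).Nonempty ∧ (link E u v).card ≤ 2 * k + 1 := by
  by_contra hcon
  push_neg at hcon
  have hδ : ∀ u v : Fin n, (link E u v).Nonempty → 2 * k + 2 ≤ (link E u v).card :=
    fun u v h => hcon u v h
  obtain ⟨p, q, r, s, hK4⟩ := exists_K4 hE hC5 hδ (by omega) hEne
  have := K4_bound hE hC5 hδ hK4
  omega

end Upper

/-! ### The extremal construction: balanced blow-up of `K4^(3)` -/

/-- color of a vertex -/
def fc {n : ℕ} (i : Fin n) : ℕ := (i : ℕ) % 4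

/-- the K4-blowup construction: all triples with pairwise distinct colors -/
def Econs (n : ℕ) : Finset (Finset (Fin n)) :=
  Finset.univ.filter (fun e => e.card = 3 ∧ (e.image fc).card = 3)

lemma mem_Econs {n : ℕ} {e : Finset (Fin n)} :
    e ∈ Econs n ↔ e.card = 3 ∧ (e.image fc).card = 3 := by
  simp [Econs]

lemma Econs_isEdgeSet (n : ℕ) : isEdgeSet (Econs n) :=
  fun e he => (mem_Econs.mp he).1

lemma edge_colors_ne {n : ℕ} {e : Finset (Fin n)} (he : e ∈ Econs n)
    {u v : Fin n} (hu : u ∈ e) (hv : v ∈ e) (huv : u ≠ v) : fc u ≠ fc v := by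
  rw [mem_Econs] at he
  intro h
  exact huv ((Finset.card_image_iff).mp (he.2.trans he.1.symm) hu hv h)

lemma fc_lt {n : ℕ} (i : Fin n) : fc i < 4 := Nat.mod_lt _ (by norm_num)

/-- the construction is C5-free: the five vertices of a `C5` are pairwise covered by
common edges, so they would need 5 pairwise distinct colors among 4. -/
lemma Econs_C5free (n : ℕ) : ¬ hasC5 (Econs n) := by
  rintro ⟨a, b, c, d, e, hab, hac, had, hae, hbc, hbd, hbe, hcd, hce, hde,
    e1, e2, e3, e4, e5⟩
  have nab : fc a ≠ fc b := edge_colors_ne e1 (by simp) (by simp) hab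
  have nac : fc a ≠ fc c := edge_colors_ne e1 (by simp) (by simp) hac
  have nad : fc a ≠ fc d := (edge_colors_ne e4 (by simp) (by simp) (Ne.symm had)).symm
  have nae : fc a ≠ fc e := (edge_colors_ne e4 (by simp) (by simp) (Ne.symm hae)).symm
  have nbc : fc b ≠ fc c := edge_colors_ne e1 (by simp) (by simp) hbc
  have nbd : fc b ≠ fc d := edge_colors_ne e2 (by simp) (by simp) hbd
  have nbe : fc b ≠ fc e := (edge_colors_ne e5 (by simp) (by simp) (Ne.symm hbe)).symm
  have ncd : fc c ≠ fc d := edge_colors_ne e2 (by simp) (by simp) hcd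
  have nce : fc c ≠ fc e := edge_colors_ne e3 (by simp) (by simp) hce
  have nde' : fc d ≠ fc e := edge_colors_ne e3 (by simp) (by simp) hde
  have la := fc_lt a; have lb := fc_lt b; have lc := fc_lt c
  have ld := fc_lt d; have le := fc_lt e
  omega

/-- a triple with pairwise distinct colors is an edge -/
lemma triple_mem_Econs {n : ℕ} {u v w : Fin n}
    (h1 : fc u ≠ fc v) (h2 : fc u ≠ fc w) (h3 : fc v ≠ fc w) :
    ({u, v, w} : Finset (Fin n)) ∈ Econs n := by
  have huv : u ≠ v := fun h => h1 (by rw [h])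
  have huw : u ≠ w := fun h => h2 (by rw [h])
  have hvw : v ≠ w := fun h => h3 (by rw [h])
  rw [mem_Econs]
  constructor
  · rw [Finset.card_eq_three]; exact ⟨u, v, w, huv, huw, hvw, rfl⟩
  · rw [Finset.image_insert, Finset.image_insert, Finset.image_singleton,
      Finset.card_eq_three]
    exact ⟨fc u, fc v, fc w, h1, h2, h3, rfl⟩

lemma Econs_nonempty (n : ℕ) (hn : 6 ≤ n) : (Econs n).Nonempty := by
  refine ⟨{⟨0, by omega⟩, ⟨1, by omega⟩, ⟨2, by omega⟩}, triple_mem_Econs ?_ ?_ ?_⟩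
  all_goals simp [fc]

/-- count of a residue class is at least m, provided 4*j+r < n for all j < m -/
lemma class_count {n m r : ℕ} (hr : r < 4) (h : ∀ j, j < m → 4 * j + r < n) :
    m ≤ (Finset.univ.filter (fun i : Fin n => fc i = r)).card := by
  classical
  have := Finset.card_le_card_of_injOn
    (f := fun j : Fin m => (⟨4 * (j : ℕ) + r, h j j.2⟩ : Fin n))
    (s := (Finset.univ : Finset (Fin m)))
    (t := Finset.univ.filter (fun i : Fin n => fc i = r))
    (by intro j _
        rw [Finset.mem_coe, Finset.mem_filter]
        simp only [Finset.mem_filter, Finset.mem_univ, true_and, fc]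
        show (4 * (j : ℕ) + r) % 4 = r
        omega)
    (by intro j _ j' _ hjj
        have : 4 * (j : ℕ) + r = 4 * (j' : ℕ) + r := congrArg Fin.val hjj
        exact Fin.ext (by omega))
  simpa using this

/-- the two unused colors -/
lemma exists_other_colors {x y : ℕ} (hx : x < 4) (hy : y < 4) (hxy : x ≠ y) :
    ∃ r s : ℕ, r < s ∧ s < 4 ∧ r ≠ x ∧ r ≠ y ∧ s ≠ x ∧ s ≠ y := by
  interval_cases x <;> interval_cases y <;>
    first
      | exact absurd rfl hxy
      | exact ⟨2, 3, by omega, by omega, by omega, by omega, by omega, by omega⟩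
      | exact ⟨1, 3, by omega, by omega, by omega, by omega, by omega, by omega⟩
      | exact ⟨1, 2, by omega, by omega, by omega, by omega, by omega, by omega⟩
      | exact ⟨0, 3, by omega, by omega, by omega, by omega, by omega, by omega⟩
      | exact ⟨0, 2, by omega, by omega, by omega, by omega, by omega, by omega⟩
      | exact ⟨0, 1, by omega, by omega, by omega, by omega, by omega, by omega⟩

lemma link_core {n : ℕ} {u v : Fin n} (hne : (link (Econs n) u v).Nonempty) :
    ∃ r s : ℕ, r < s ∧ s < 4 ∧
      (Finset.univ.filter (fun i : Fin n => fc i = r)).card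
        + (Finset.univ.filter (fun i : Fin n => fc i = s)).card
        ≤ (link (Econs n) u v).card := by
  classical
  obtain ⟨w, hw⟩ := hne
  rw [link, Finset.mem_filter] at hw
  have hw' := hw.2
  have huv : u ≠ v := by
    intro h
    have hc := (mem_Econs.mp hw').1
    rw [h] at hc
    have : ({v, v, w} : Finset (Fin n)) = {v, w} := by
      rw [Finset.insert_idem]
    rw [this] at hc
    have := Finset.card_insert_le v ({w} : Finset (Fin n))
    simp at this hc
    omega
  have hfc : fc u ≠ fc v :=
    edge_colors_ne hw' (by simp) (by simp) huv
  obtain ⟨r, s, hrs, hs4, hru, hrv, hsu, hsv⟩ :=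
    exists_other_colors (Nat.mod_lt _ (by norm_num)) (Nat.mod_lt _ (by norm_num)) hfc
  refine ⟨r, s, hrs, hs4, ?_⟩
  have hsub : (Finset.univ.filter (fun i : Fin n => fc i = r))
      ∪ (Finset.univ.filter (fun i : Fin n => fc i = s)) ⊆ link (Econs n) u v := by
    intro x hx
    simp only [Finset.mem_union, Finset.mem_filter, Finset.mem_univ, true_and] at hx
    rw [link, Finset.mem_filter]
    refine ⟨Finset.mem_univ _, ?_⟩
    rcases hx with hx | hx
    · exact triple_mem_Econs hfc (by rw [hx]; exact fun h => hru h.symm)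
        (by rw [hx]; exact fun h => hrv h.symm)
    · exact triple_mem_Econs hfc (by rw [hx]; exact fun h => hsu h.symm)
        (by rw [hx]; exact fun h => hsv h.symm)
  have hdisj : Disjoint (Finset.univ.filter (fun i : Fin n => fc i = r))
      (Finset.univ.filter (fun i : Fin n => fc i = s)) := by
    rw [Finset.disjoint_filter]
    intro x _ hxr hxs
    exact absurd (hxr ▸ hxs) (by omega)
  calc (Finset.univ.filter (fun i : Fin n => fc i = r)).card
        + (Finset.univ.filter (fun i : Fin n => fc i = s)).card
      = ((Finset.univ.filter (fun i : Fin n => fc i = r))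
        ∪ (Finset.univ.filter (fun i : Fin n => fc i = s))).card := by
        rw [Finset.card_union_of_disjoint hdisj]
    _ ≤ (link (Econs n) u v).card := Finset.card_le_card hsub

lemma link_lower_A {n k : ℕ} (h4 : 4 * k ≤ n) {u v : Fin n}
    (hne : (link (Econs n) u v).Nonempty) : 2 * k ≤ (link (Econs n) u v).card := by
  obtain ⟨r, s, hrs, hs4, hcard⟩ := link_core hne
  have hr := class_count (n := n) (m := k) (r := r) (by omega) (fun j hj => by omega)
  have hs := class_count (n := n) (m := k) (r := s) (by omega) (fun j hj => by omega)
  omega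

lemma link_lower_B {n k : ℕ} (h4 : n = 4 * k + 3) {u v : Fin n}
    (hne : (link (Econs n) u v).Nonempty) : 2 * k + 1 ≤ (link (Econs n) u v).card := by
  obtain ⟨r, s, hrs, hs4, hcard⟩ := link_core hne
  have hr := class_count (n := n) (m := k + 1) (r := r) (by omega) (fun j hj => by omega)
  have hs := class_count (n := n) (m := k) (r := s) (by omega) (fun j hj => by omega)
  omega

/-- for `n ≥ 6`, `co⁺ex(n, C5) = 2k` if `n ∈ {4k, 4k+1, 4k+2}` and
`co⁺ex(n, C5) = 2k+1` if `n = 4k+3`. -/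
theorem stmt_19 (n k : ℕ) (hn : 6 ≤ n) :
    ((n = 4 * k ∨ n = 4 * k + 1 ∨ n = 4 * k + 2) →
      (∃ E : Finset (Finset (Fin n)), isEdgeSet E ∧ E.Nonempty ∧ ¬ hasC5 E ∧
        ∀ u v : Fin n, (link E u v).Nonempty → 2 * k ≤ (link E u v).card) ∧
      (∀ E : Finset (Finset (Fin n)), isEdgeSet E → E.Nonempty → ¬ hasC5 E →
        ∃ u v : Fin n, (link E u v).Nonempty ∧ (link E u v).card ≤ 2 * k)) ∧
    (n = 4 * k + 3 →
      (∃ E : Finset (Finset (Fin n)), isEdgeSet E ∧ E.Nonempty ∧ ¬ hasC5 E ∧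
        ∀ u v : Fin n, (link E u v).Nonempty → 2 * k + 1 ≤ (link E u v).card) ∧
      (∀ E : Finset (Finset (Fin n)), isEdgeSet E → E.Nonempty → ¬ hasC5 E →
        ∃ u v : Fin n, (link E u v).Nonempty ∧ (link E u v).card ≤ 2 * k + 1)) := by
  constructor
  · intro hcase
    constructor
    · exact ⟨Econs n, Econs_isEdgeSet n, Econs_nonempty n hn, Econs_C5free n,
        fun u v hne => link_lower_A (by omega) hne⟩
    · intro E hE hEne hC5
      exact upper_A hE hEne hC5 hcase
  · intro hcase
    constructor
    · exact ⟨Econs n, Econs_isEdgeSet n, Econs_nonempty n hn, Econs_C5free n,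
        fun u v hne => link_lower_B hcase hne⟩
    · intro E hE hEne hC5
      exact upper_B hE hEne hC5 hcase
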